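/- Let n ≥ 1 and let B be an alternating ℂ-bilinear form on V = (ℂ×ℂ)^n such that B(T_{a,σ} v, T_{a,σ} w) = B(v, w) for every a : Fin n → ℂˣ taking values in {1, −1}, every permutation σ of Fin n, and all v, w ∈ V. Then there exists c ∈ ℂ with B = c·ω; in particular the space of such invariant alternating forms is one-dimensional. (This computes h^{2,0}(E^{2n}/Γ) = 1 for Γ = (ℤ/2ℤ)^n ⋊ S_n, showing E^{2n}/Γ is a primitively symplectic V-manifold.) -/

import Mathlib

open scoped BigOperators

/-- The linear map `T_{a,σ}` on `(ℂ×ℂ)ⁿ`: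
`(T_{a,σ} v)_i = (a(σ⁻¹ i)·(v(σ⁻¹ i))₁, a(σ⁻¹ i)⁻¹·(v(σ⁻¹ i))₂)`. -/
def Tmap {n : ℕ} (a : Fin n → ℂˣ) (σ : Equiv.Perm (Fin n))
    (v : Fin n → ℂ × ℂ) : Fin n → ℂ × ℂ :=
  fun i => ((a (σ⁻¹ i) : ℂ) * (v (σ⁻¹ i)).1, (((a (σ⁻¹ i))⁻¹ : ℂˣ) : ℂ) * (v (σ⁻¹ i)).2)

/-- The standard symplectic form `ω(v,w) = Σᵢ ((v i)₁(w i)₂ − (v i)₂(w i)₁)`. -/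
noncomputable def omegaForm {n : ℕ} (v w : Fin n → ℂ × ℂ) : ℂ :=
  ∑ i, ((v i).1 * (w i).2 - (v i).2 * (w i).1)

lemma Tmap_single {n : ℕ} (a : Fin n → ℂˣ) (σ : Equiv.Perm (Fin n)) (j : Fin n) (p : ℂ × ℂ) :
    Tmap a σ (Pi.single j p) = Pi.single (σ j) (((a j : ℂ)) * p.1, (((a j)⁻¹ : ℂˣ) : ℂ) * p.2) := by
  classical
  funext k
  by_cases h : k = σ j
  · subst h
    simp only [Tmap]
    rw [Equiv.Perm.inv_def, Equiv.symm_apply_apply]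
    simp
  · have h1 : σ⁻¹ k ≠ j := fun hc => h (by rw [← hc]; simp)
    simp [Tmap, Pi.single_eq_of_ne (show σ.symm k ≠ j from h1), Pi.single_eq_of_ne h]

theorem stmt17 {n : ℕ} (hn : 1 ≤ n)
    (B : (Fin n → ℂ × ℂ) →ₗ[ℂ] (Fin n → ℂ × ℂ) →ₗ[ℂ] ℂ)
    (hBalt : ∀ v, B v v = 0)
    (hBinv : ∀ a : Fin n → ℂˣ, (∀ i, a i = 1 ∨ a i = -1) →
      ∀ σ : Equiv.Perm (Fin n), ∀ v w, B (Tmap a σ v) (Tmap a σ w) = B v w) :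
    ∃ c : ℂ, ∀ v w, B v w = c * omegaForm v w := by
  classical
  set e : Fin n → (Fin n → ℂ × ℂ) := fun i => Pi.single i ((1 : ℂ), (0 : ℂ)) with he
  set f : Fin n → (Fin n → ℂ × ℂ) := fun i => Pi.single i ((0 : ℂ), (1 : ℂ)) with hf
  have hskew : ∀ v w, B w v = - B v w := by
    intro v w
    have h := hBalt (v + w)
    simp only [map_add, LinearMap.add_apply, hBalt] at h
    linear_combination h
  -- flip at i
  have hflip : ∀ (i j : Fin n) (p : ℂ × ℂ),
      Tmap (fun k => if k = i then (-1 : ℂˣ) else 1) 1 (Pi.single j p)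
        = Pi.single j (if j = i then -p else p) := by
    intro i j p
    rw [Tmap_single, Equiv.Perm.one_apply]
    by_cases h : j = i
    · exact congrArg (Pi.single j) (by simp [h, Prod.ext_iff])
    · exact congrArg (Pi.single j) (by simp [h, Prod.ext_iff])
  have haflip : ∀ i : Fin n, ∀ k, (fun k => if k = i then (-1 : ℂˣ) else 1) k = 1 ∨
      (fun k => if k = i then (-1 : ℂˣ) else 1) k = -1 := by
    intro i k; by_cases h : k = i <;> simp [h]
  -- off-diagonal vanishing
  have hvanish : ∀ (i j : Fin n) (p q : ℂ × ℂ), i ≠ j →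
      B (Pi.single i p) (Pi.single j q) = 0 := by
    intro i j p q hij
    have h := hBinv _ (haflip i) 1 (Pi.single i p) (Pi.single j q)
    rw [hflip, hflip] at h
    simp only [eq_self_iff_true, if_true, if_neg (Ne.symm hij)] at h
    have hne : Pi.single i (-p) = -(Pi.single i p : Fin n → ℂ × ℂ) := by
      funext k; by_cases hk : k = i
      · subst hk; simp
      · simp [Pi.single_eq_of_ne hk]
    rw [hne, map_neg, LinearMap.neg_apply] at h
    linear_combination (-1/2 : ℂ) * h
  -- identify diagonal coefficients via swap
  set i0 : Fin n := ⟨0, hn⟩ with hi0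
  set c : ℂ := B (e i0) (f i0) with hc
  have hswap : ∀ (i : Fin n) (p q : ℂ × ℂ),
      B (Pi.single i p) (Pi.single i q) = B (Pi.single i0 p) (Pi.single i0 q) := by
    intro i p q
    have h := hBinv 1 (fun _ => Or.inl rfl) (Equiv.swap i0 i) (Pi.single i0 p) (Pi.single i0 q)
    rw [Tmap_single, Tmap_single] at h
    simpa using h
  have hef : ∀ i : Fin n, B (e i) (f i) = c := fun i => hswap i _ _
  have hfe : ∀ i : Fin n, B (f i) (e i) = -c := by
    intro i; rw [hskew, hef]
  have hv : ∀ v : Fin n → ℂ × ℂ, v = ∑ i, ((v i).1 • e i + (v i).2 • f i) := by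
    intro v
    funext j
    simp only [Finset.sum_apply, Pi.add_apply, Pi.smul_apply, he, hf]
    rw [Finset.sum_eq_single j]
    · simp [Prod.ext_iff]
    · intro b _ hb
      simp [Pi.single_eq_of_ne (Ne.symm hb)]
    · simp
  refine ⟨c, fun v w => ?_⟩
  conv_lhs => rw [hv v, hv w]
  rw [omegaForm]
  simp only [map_sum, map_add, map_smul, LinearMap.sum_apply, LinearMap.add_apply,
    LinearMap.smul_apply, smul_eq_mul, Finset.mul_sum]
  refine Finset.sum_congr rfl fun x _ => ?_
  rw [← Finset.sum_add_distrib, Finset.sum_eq_single x]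
  · have h1 : B (e x) (e x) = 0 := hBalt _
    have h2 : B (f x) (f x) = 0 := hBalt _
    rw [h1, h2, hef, hfe]
    ring
  · intro i _ hix
    have h1 : B (e i) (e x) = 0 := hvanish _ _ _ _ hix
    have h2 : B (e i) (f x) = 0 := hvanish _ _ _ _ hix
    have h3 : B (f i) (e x) = 0 := hvanish _ _ _ _ hix
    have h4 : B (f i) (f x) = 0 := hvanish _ _ _ _ hix
    rw [h1, h2, h3, h4]; ring
  · simp
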